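/- Suppose the noise transition matrix T is row-diagonally dominant, i.e., for every class i and every j ≠ i one has T i j < T i i. Then the target concept f* minimizes the expected 0-1 loss on the noisy distribution: for every measurable classifier f : X → Fin c, ν {(x, y) : f* x ≠ y} ≤ ν {(x, y) : f x ≠ y}, where ν is the noisy joint distribution. -/

import Mathlib

open MeasureTheory

private lemma kernel_measurable {X : Type*} [MeasurableSpace X]
    (c : ℕ) (fstar : X → Fin c) (hfstar : Measurable fstar) (T : Fin c → Fin c → ℝ) :
    Measurable (fun x => ∑ j, ENNReal.ofReal (T (fstar x) j) • Measure.dirac (x, j) :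
      X → Measure (X × Fin c)) := by
  apply Measure.measurable_of_measurable_coe
  intro s hs
  simp only [Measure.coe_finset_sum, Finset.sum_apply, Measure.smul_apply, smul_eq_mul,
    Measure.dirac_apply' _ hs]
  apply Finset.measurable_sum
  intro j _
  apply Measurable.mul
  · exact (measurable_of_countable (fun i => ENNReal.ofReal (T i j))).comp hfstar
  · exact (measurable_one.indicator hs).comp (measurable_prodMk_right (y := j))

private lemma key_eval {X : Type*} [MeasurableSpace X] (μ : Measure X)
    (c : ℕ) (fstar : X → Fin c) (hfstar : Measurable fstar) (T : Fin c → Fin c → ℝ)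
    (g : X → Fin c) (hg : Measurable g) :
    (μ.bind (fun x => ∑ j, ENNReal.ofReal (T (fstar x) j) • Measure.dirac (x, j)))
      {p : X × Fin c | g p.1 ≠ p.2}
    = ∫⁻ x, ∑ j ∈ Finset.univ.erase (g x), ENNReal.ofReal (T (fstar x) j) ∂μ := by
  have hs : MeasurableSet {p : X × Fin c | g p.1 ≠ p.2} :=
    (measurableSet_eq_fun (hg.comp measurable_fst) measurable_snd).compl
  rw [Measure.bind_apply hs (kernel_measurable c fstar hfstar T).aemeasurable]
  refine lintegral_congr fun x => ?_
  simp only [Measure.coe_finset_sum, Finset.sum_apply, Measure.smul_apply, smul_eq_mul,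
    Measure.dirac_apply' _ hs]
  rw [← Finset.sum_erase (a := g x) (f := fun j => ENNReal.ofReal (T (fstar x) j) *
      Set.indicator {p : X × Fin c | g p.1 ≠ p.2} 1 (x, j)) Finset.univ (by simp)]
  refine Finset.sum_congr rfl fun j hj => ?_
  rw [Set.indicator_of_mem (by exact (Finset.ne_of_mem_erase hj).symm), Pi.one_apply, mul_one]

theorem target_concept_minimizes_expected_01_loss
    {X : Type*} [MeasurableSpace X] (μ : Measure X) [IsProbabilityMeasure μ]
    (c : ℕ) (hc : 1 ≤ c)
    (fstar : X → Fin c) (hfstar : Measurable fstar)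
    (T : Fin c → Fin c → ℝ)
    (hT0 : ∀ i j, 0 ≤ T i j) (hT1 : ∀ i, ∑ j, T i j = 1)
    (hdom : ∀ i j, j ≠ i → T i j < T i i)
    (ν : Measure (X × Fin c))
    (hν : ν = μ.bind (fun x => ∑ j, ENNReal.ofReal (T (fstar x) j) • Measure.dirac (x, j)))
    (f : X → Fin c) (hf : Measurable f) :
    ν {p : X × Fin c | fstar p.1 ≠ p.2} ≤ ν {p : X × Fin c | f p.1 ≠ p.2} := by
  rw [hν, key_eval μ c fstar hfstar T fstar hfstar, key_eval μ c fstar hfstar T f hf]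
  refine lintegral_mono fun x => ?_
  have hsum : ∀ a : Fin c, ∑ j ∈ Finset.univ.erase a, ENNReal.ofReal (T (fstar x) j)
      = ENNReal.ofReal (1 - T (fstar x) a) := by
    intro a
    rw [← ENNReal.ofReal_sum_of_nonneg (fun j _ => hT0 _ j)]
    congr 1
    have := Finset.add_sum_erase Finset.univ (T (fstar x)) (Finset.mem_univ a)
    rw [hT1] at this
    linarith
  rw [hsum, hsum]
  apply ENNReal.ofReal_le_ofReal
  rcases eq_or_ne (f x) (fstar x) with h | h
  · rw [h]
  · have := hdom (fstar x) (f x) h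
    linarith
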